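/- arXiv:2202.09080 — 2 statements merged into one kernel-verified Lean document; each statement's English description precedes it below -/
import Mathlib

section
/- Let H = [[a,b],[c,d]] be a 2×2 unitary matrix with abcd ≠ 0 and κ ≥ 1. Then the κ×κ circulant matrix Circ(H) defined by first column entries w_0 = d + (bc/(1−a^κ))a^{κ−1} and w_ℓ = (bc/(1−a^κ))a^{ℓ−1} (ℓ = 1,…,κ−1) is unitary. -/
open Finset
open scoped Matrix

theorem zmod_sum_range' (κ : ℕ) [NeZero κ] (F : ZMod κ → ℂ) :
    ∑ m : ZMod κ, F m = ∑ n ∈ Finset.range κ, F (n : ZMod κ) :=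
  Finset.sum_nbij' (fun m => m.val) (fun n => (n : ZMod κ))
    (by simp [ZMod.val_lt]) (by simp) (by simp [ZMod.natCast_zmod_val])
    (fun n hn => by simp [ZMod.val_cast_of_lt (Finset.mem_range.mp hn)])
    (by simp [ZMod.natCast_zmod_val])

theorem val_sub_one' (κ : ℕ) [NeZero κ] (x : ZMod κ) :
    (x - 1).val = if x = 0 then κ - 1 else x.val - 1 := by
  have hκ : 1 ≤ κ := Nat.one_le_iff_ne_zero.mpr (NeZero.ne κ)
  split_ifs with hx
  · subst hx
    have : ((κ - 1 : ℕ) : ZMod κ) = 0 - 1 := by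
      push_cast [Nat.cast_sub hκ, ZMod.natCast_self]; ring
    rw [← this, ZMod.val_cast_of_lt (by omega)]
  · have h1 : 1 ≤ x.val := Nat.one_le_iff_ne_zero.mpr (fun h => hx (by
      rw [← ZMod.natCast_zmod_val x, h, Nat.cast_zero]))
    have : ((x.val - 1 : ℕ) : ZMod κ) = x - 1 := by
      push_cast [Nat.cast_sub h1, ZMod.natCast_zmod_val]; ring
    rw [← this, ZMod.val_cast_of_lt (by have := ZMod.val_lt x; omega)]

theorem sum_pow_val' (κ : ℕ) [NeZero κ] (a e : ℂ) (ℓ : ZMod κ) :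
    ∑ m : ZMod κ, a ^ (m + ℓ).val * e ^ m.val
      = a ^ ℓ.val * ∑ n ∈ Finset.range (κ - ℓ.val), (a * e) ^ n
        + e ^ (κ - ℓ.val) * ∑ n ∈ Finset.range ℓ.val, (a * e) ^ n := by
  have hL : ℓ.val < κ := ZMod.val_lt ℓ
  rw [zmod_sum_range']
  have key : ∀ n ∈ Finset.range κ,
      a ^ ((n : ZMod κ) + ℓ).val * e ^ ((n : ZMod κ)).val
        = a ^ ((n + ℓ.val) % κ) * e ^ n := by
    intro n hn
    have hn' := Finset.mem_range.mp hn
    have h1 : ((n : ZMod κ) + ℓ) = ((n + ℓ.val : ℕ) : ZMod κ) := by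
      push_cast [ZMod.natCast_zmod_val]; ring
    rw [h1, ZMod.val_natCast, ZMod.val_cast_of_lt hn']
  rw [Finset.sum_congr rfl key]
  conv_lhs => rw [Finset.range_eq_Ico,
    ← Finset.sum_Ico_consecutive _ (Nat.zero_le (κ - ℓ.val)) (Nat.sub_le κ ℓ.val)]
  congr 1
  · rw [← Finset.range_eq_Ico, Finset.mul_sum]
    refine Finset.sum_congr rfl fun n hn => ?_
    have hn' := Finset.mem_range.mp hn
    rw [Nat.mod_eq_of_lt (by omega), pow_add, mul_pow]; ring
  · rw [Finset.sum_Ico_eq_sum_range, Finset.mul_sum]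
    have hc : κ - (κ - ℓ.val) = ℓ.val := by omega
    rw [hc]
    refine Finset.sum_congr rfl fun p hp => ?_
    have hp' := Finset.mem_range.mp hp
    have hmod : (κ - ℓ.val + p + ℓ.val) % κ = p := by
      have : κ - ℓ.val + p + ℓ.val = κ + p := by omega
      rw [this, Nat.add_mod_left, Nat.mod_eq_of_lt (by omega)]
    rw [hmod, pow_add, mul_pow]; ring

theorem conv_eq' (κ : ℕ) [NeZero κ] (a e d d' u u' : ℂ) (ℓ : ZMod κ)
    (hcore0 : d*d' + d*(u'*e^(κ-1)) + (u*a^(κ-1))*d'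
        + u*u'*(∑ n ∈ Finset.range κ, (a*e)^n) = 1)
    (hcore1 : ∀ p q : ℕ, κ = p+q+2 → ℓ.val = p+1 →
        d*(u'*e^q) + (u*a^p)*d'
          + u*u'*(a^(p+1) * ∑ n ∈ Finset.range (q+1), (a*e)^n
            + e^(q+1) * ∑ n ∈ Finset.range (p+1), (a*e)^n) = 0) :
    ∑ j : ZMod κ, (((if ℓ+j = 0 then d else 0) + u * a^((ℓ+j-1).val))
        * ((if j = 0 then d' else 0) + u' * e^((j-1).val)))
      = if ℓ = 0 then 1 else 0 := by
  have hκ : 1 ≤ κ := Nat.one_le_iff_ne_zero.mpr (NeZero.ne κ)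
  have expand : ∀ j : ZMod κ,
      (((if ℓ+j = 0 then d else 0) + u * a^((ℓ+j-1).val))
        * ((if j = 0 then d' else 0) + u' * e^((j-1).val)))
      = (if j = 0 then (if ℓ = 0 then d*d' else 0) else 0)
        + (if j = -ℓ then d * (u' * e^((-ℓ-1).val)) else 0)
        + (if j = 0 then (u * a^((ℓ-1).val)) * d' else 0)
        + (u * a^((ℓ+j-1).val)) * (u' * e^((j-1).val)) := by
    intro j
    by_cases hj0 : j = 0 <;> by_cases hjl : j = -ℓ
    · have hl : ℓ = 0 := by rw [hj0] at hjl; simpa using hjl.symm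
      simp [hj0, hl]; ring
    · have hl : ℓ ≠ 0 := fun h => hjl (by simp [hj0, h])
      have : ℓ + j ≠ 0 := by rw [hj0, add_zero]; exact hl
      simp [hj0, hl, this]; ring
    · have hl : ℓ ≠ 0 := fun h => hj0 (by simpa [h] using hjl)
      have h2 : ℓ + j = 0 := by rw [hjl]; ring
      simp [hj0, hjl, hl, h2]; ring
    · have : ℓ + j ≠ 0 := fun h => hjl (by linear_combination (norm := module) h)
      simp [hj0, hjl, this]
  rw [Finset.sum_congr rfl (fun j _ => expand j)]
  simp only [Finset.sum_add_distrib, Finset.sum_ite_eq' Finset.univ, Finset.mem_univ, if_true]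
  have hS4 : ∑ j : ZMod κ, (u * a^((ℓ+j-1).val)) * (u' * e^((j-1).val))
      = u*u'*(a^(ℓ.val) * ∑ n ∈ Finset.range (κ - ℓ.val), (a*e)^n
          + e^(κ - ℓ.val) * ∑ n ∈ Finset.range ℓ.val, (a*e)^n) := by
    have := Fintype.sum_equiv (Equiv.subRight (1 : ZMod κ))
      (fun j => (u * a^((ℓ+j-1).val)) * (u' * e^((j-1).val)))
      (fun m => (u * u') * (a ^ (m + ℓ).val * e ^ m.val))
      (fun j => by simp only [Equiv.subRight_apply]; rw [show j - 1 + ℓ = ℓ + j - 1 by ring]; ring)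
    rw [this, ← Finset.mul_sum, sum_pow_val']
  rw [hS4]
  by_cases hl : ℓ = 0
  · subst hl
    rw [if_pos rfl, if_pos rfl]
    have v1 : ((0:ZMod κ) - 1).val = κ - 1 := by rw [val_sub_one']; simp
    have v2 : ((-(0:ZMod κ)) - 1).val = κ - 1 := by rw [neg_zero]; exact v1
    rw [v1, v2, ZMod.val_zero]
    simp only [pow_zero, one_mul, Nat.sub_zero, Finset.range_zero, Finset.sum_empty,
      mul_zero, add_zero]
    linear_combination hcore0
  · have hL1 : 1 ≤ ℓ.val := Nat.one_le_iff_ne_zero.mpr (fun h => hl (by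
      rw [← ZMod.natCast_zmod_val ℓ, h, Nat.cast_zero]))
    have hL2 : ℓ.val < κ := ZMod.val_lt ℓ
    have hnl : (-ℓ) ≠ 0 := fun h => hl (by simpa using h)
    obtain ⟨p, hp⟩ : ∃ p, ℓ.val = p + 1 := ⟨ℓ.val - 1, by omega⟩
    obtain ⟨q, hq⟩ : ∃ q, κ = p + q + 2 := ⟨κ - ℓ.val - 1, by omega⟩
    have e1 : (ℓ - 1).val = p := by rw [val_sub_one', if_neg hl]; omega
    have e2 : (-ℓ - 1).val = q := by
      rw [val_sub_one', if_neg hnl, ZMod.neg_val, if_neg hl]; omega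
    have e3 : κ - ℓ.val = q + 1 := by omega
    rw [if_neg hl, if_neg hl, e1, e2, e3, hp]
    linear_combination hcore1 p q hq hp

theorem scalar0' (a e b c P Q : ℂ) (hb : b ≠ 0) (hc : c ≠ 0)
    (h1 : 1 - a*e ≠ 0) (hD : 1 - a*P ≠ 0) (hD' : 1 - e*Q ≠ 0) :
    (-(e*c*b)/(1-a*e)) * (-(a*(1-a*e))/(c*b))
      + (-(e*c*b)/(1-a*e)) * (((((1-a*e)/b)*((1-a*e)/c))/(1-e*Q)) * Q)
      + ((b*c/(1-a*P)) * P) * (-(a*(1-a*e))/(c*b))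
      + (b*c/(1-a*P)) * ((((1-a*e)/b)*((1-a*e)/c))/(1-e*Q)) * ((a*P*(e*Q) - 1)/(a*e-1)) = 1 := by
  have T1 : (-(e*c*b)/(1-a*e)) * (-(a*(1-a*e))/(c*b)) = a*e := by field_simp; exact mul_div_cancel_right₀ _ (by rwa [mul_comm] : 1 - e*a ≠ 0)
  have T2 : (-(e*c*b)/(1-a*e)) * (((((1-a*e)/b)*((1-a*e)/c))/(1-e*Q)) * Q)
      = -(e*Q*(1-a*e))/(1-e*Q) := by field_simp
  have T3 : ((b*c/(1-a*P)) * P) * (-(a*(1-a*e))/(c*b)) = -(a*P*(1-a*e))/(1-a*P) := by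
    field_simp
  have hu : (b*c/(1-a*P)) * ((((1-a*e)/b)*((1-a*e)/c))/(1-e*Q))
      = ((1-a*e)*(1-a*e))/((1-a*P)*(1-e*Q)) := by field_simp
  have hrw : (a*P*(e*Q) - 1)/(a*e-1) = (1 - a*P*(e*Q))/(1-a*e) := by
    rw [← neg_div_neg_eq]; ring_nf
  have T4 : (b*c/(1-a*P)) * ((((1-a*e)/b)*((1-a*e)/c))/(1-e*Q)) * ((a*P*(e*Q) - 1)/(a*e-1))
      = ((1-a*e)*(1-a*e)*(1 - a*P*(e*Q)))/((1-a*P)*(1-e*Q)*(1-a*e)) := by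
    rw [hu, hrw, div_mul_div_comm]
  rw [T1, T2, T3, T4]
  field_simp
  ring

theorem scalar1' (a e b c P Q R S : ℂ) (hb : b ≠ 0) (hc : c ≠ 0)
    (h1 : 1 - a*e ≠ 0) (hD : 1 - a*(a*(P*R)) ≠ 0) (hD' : 1 - e*(e*(Q*S)) ≠ 0) :
    (-(e*c*b)/(1-a*e)) * (((((1-a*e)/b)*((1-a*e)/c))/(1-e*(e*(Q*S)))) * Q)
      + ((b*c/(1-a*(a*(P*R)))) * P) * (-(a*(1-a*e))/(c*b))
      + (b*c/(1-a*(a*(P*R)))) * ((((1-a*e)/b)*((1-a*e)/c))/(1-e*(e*(Q*S))))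
        * ((a*P) * ((a*R*(e*Q) - 1)/(a*e-1)) + (e*Q) * ((a*P*(e*S) - 1)/(a*e-1))) = 0 := by
  have T2 : (-(e*c*b)/(1-a*e)) * (((((1-a*e)/b)*((1-a*e)/c))/(1-e*(e*(Q*S)))) * Q)
      = -(e*Q*(1-a*e))/(1-e*(e*(Q*S))) := by field_simp
  have T3 : ((b*c/(1-a*(a*(P*R)))) * P) * (-(a*(1-a*e))/(c*b))
      = -(a*P*(1-a*e))/(1-a*(a*(P*R))) := by field_simp
  have hu : (b*c/(1-a*(a*(P*R)))) * ((((1-a*e)/b)*((1-a*e)/c))/(1-e*(e*(Q*S))))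
      = ((1-a*e)*(1-a*e))/((1-a*(a*(P*R)))*(1-e*(e*(Q*S)))) := by field_simp
  have hrw1 : (a*R*(e*Q) - 1)/(a*e-1) = (1 - a*R*(e*Q))/(1-a*e) := by
    rw [← neg_div_neg_eq]; ring_nf
  have hrw2 : (a*P*(e*S) - 1)/(a*e-1) = (1 - a*P*(e*S))/(1-a*e) := by
    rw [← neg_div_neg_eq]; ring_nf
  rw [hu, hrw1, hrw2, T2, T3]
  have hE : 1 - e^2*Q*S ≠ 0 := by ring_nf at hD' ⊢; exact hD'
  have hA : 1 - a^2*P*R ≠ 0 := by ring_nf at hD ⊢; exact hD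
  field_simp
  ring

/-- First column of the circulant matrix `Circ(H)` induced by `H = !![a,b;c,d]`. -/
noncomputable def circWeight (κ : ℕ) [NeZero κ] (a b c d : ℂ) : ZMod κ → ℂ :=
  fun ℓ => if ℓ = 0 then d + b * c / (1 - a ^ κ) * a ^ (κ - 1)
           else b * c / (1 - a ^ κ) * a ^ (ℓ.val - 1)

theorem circWeight_eq (κ : ℕ) [NeZero κ] (a b c d : ℂ) (j : ZMod κ) :
    circWeight κ a b c d j = (if j = 0 then d else 0) + (b * c / (1 - a ^ κ)) * a ^ ((j-1).val) := by
  unfold circWeight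
  split_ifs with hj
  · subst hj
    rw [val_sub_one', if_pos rfl]
  · rw [val_sub_one', if_neg hj, zero_add]

set_option maxHeartbeats 1000000 in
theorem stmt_3 (κ : ℕ) [NeZero κ] (a b c d : ℂ)
    (hU : !![a, b; c, d] ∈ Matrix.unitaryGroup (Fin 2) ℂ)
    (h : a * b * c * d ≠ 0) :
    Matrix.circulant (circWeight κ a b c d) ∈ Matrix.unitaryGroup (ZMod κ) ℂ := by
  -- nonzero entries
  have hd0 : d ≠ 0 := fun h0 => h (by rw [h0, mul_zero])
  have hc0 : c ≠ 0 := fun h0 => h (by rw [h0]; ring)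
  have hb0 : b ≠ 0 := fun h0 => h (by rw [h0]; ring)
  have ha0 : a ≠ 0 := fun h0 => h (by rw [h0]; ring)
  set e := star a with he
  -- unitarity entry relations
  have h₁ : !![a, b; c, d] * star !![a, b; c, d] = 1 := Matrix.mem_unitaryGroup_iff.mp hU
  have h₂ : star !![a, b; c, d] * !![a, b; c, d] = 1 := Matrix.mem_unitaryGroup_iff'.mp hU
  have E1 : a * star a + b * star b = 1 := by
    have := congrFun (congrFun h₁ 0) 0
    simpa [Matrix.mul_apply, Fin.sum_univ_two, Matrix.one_apply, Matrix.star_apply] using this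
  have E3 : a * star c + b * star d = 0 := by
    have := congrFun (congrFun h₁ 0) 1
    simpa [Matrix.mul_apply, Fin.sum_univ_two, Matrix.one_apply, Matrix.star_apply] using this
  have E2 : star a * a + star c * c = 1 := by
    have := congrFun (congrFun h₂ 0) 0
    simpa [Matrix.mul_apply, Fin.sum_univ_two, Matrix.one_apply, Matrix.star_apply] using this
  have E4 : star a * b + star c * d = 0 := by
    have := congrFun (congrFun h₂ 0) 1
    simpa [Matrix.mul_apply, Fin.sum_univ_two, Matrix.one_apply, Matrix.star_apply] using this
  have h1 : 1 - a * e ≠ 0 := by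
    intro h0
    have hbb : b * star b = 0 := by rw [he] at h0; linear_combination E1 + h0
    rcases mul_eq_zero.mp hbb with h' | h'
    · exact hb0 h'
    · exact hb0 (star_eq_zero.mp h')
  -- |a| < 1
  have habs : ‖a‖ < 1 := by
    have hns : Complex.normSq a + Complex.normSq b = 1 := by
      have : ((Complex.normSq a : ℂ)) + (Complex.normSq b : ℂ) = 1 := by
        rw [← Complex.mul_conj, ← Complex.mul_conj]
        simpa [Complex.star_def] using E1
      exact_mod_cast this
    have hbpos : 0 < Complex.normSq b := Complex.normSq_pos.mpr hb0
    have : Complex.normSq a < 1 := by linarith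
    nlinarith [Complex.sq_norm a, norm_nonneg a]
  have hD : 1 - a ^ κ ≠ 0 := by
    intro h0
    have : a ^ κ = 1 := by linear_combination -h0
    have habs2 : ‖a ^ κ‖ = 1 := by rw [this, norm_one]
    rw [norm_pow] at habs2
    have : ‖a‖ ^ κ < 1 := pow_lt_one₀ (norm_nonneg a) habs (NeZero.ne κ)
    linarith [habs2.le, habs2.ge]
  have hD' : 1 - e ^ κ ≠ 0 := by
    intro h0
    have : e ^ κ = 1 := by linear_combination -h0
    have habs2 : ‖e ^ κ‖ = 1 := by rw [this, norm_one]
    rw [norm_pow] at habs2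
    have habse : ‖e‖ = ‖a‖ := by
      rw [he, Complex.star_def, Complex.norm_conj]
    rw [habse] at habs2
    have : ‖a‖ ^ κ < 1 := pow_lt_one₀ (norm_nonneg a) habs (NeZero.ne κ)
    linarith [habs2.le, habs2.ge]
  -- solve for star b, star c, star d, d
  have hb' : star b = (1 - a * e) / b := by
    rw [eq_div_iff hb0, he]; linear_combination E1
  have hc' : star c = (1 - a * e) / c := by
    rw [eq_div_iff hc0, he]; linear_combination E2
  have hd' : star d = -(a * (1 - a * e)) / (c * b) := by
    rw [eq_div_iff (mul_ne_zero hc0 hb0), he]; linear_combination c * E3 - a * E2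
  have hdval : d = -(e * c * b) / (1 - a * e) := by
    rw [eq_div_iff h1, he]; linear_combination c * E4 - d * E2
  -- matrix glue
  rw [Matrix.mem_unitaryGroup_iff, Matrix.star_eq_conjTranspose,
    Matrix.conjTranspose_circulant, Matrix.circulant_mul, ← Matrix.circulant_single_one,
    Matrix.circulant_inj]
  funext ℓ
  have step1 : (Matrix.circulant (circWeight κ a b c d) *ᵥ star (fun i => circWeight κ a b c d (-i))) ℓ
      = ∑ j : ZMod κ, circWeight κ a b c d (ℓ - j) * star (circWeight κ a b c d (-j)) := by
    simp [Matrix.mulVec, dotProduct, Matrix.circulant_apply, Complex.star_def]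
  rw [step1]
  have step2 : ∑ j : ZMod κ, circWeight κ a b c d (ℓ - j) * star (circWeight κ a b c d (-j))
      = ∑ j : ZMod κ, circWeight κ a b c d (ℓ + j) * star (circWeight κ a b c d j) := by
    refine Fintype.sum_equiv (Equiv.neg (ZMod κ)) _ _ fun j => ?_
    simp only [Equiv.neg_apply, neg_neg, sub_neg_eq_add, sub_eq_add_neg]
  rw [step2]
  set u : ℂ := b * c / (1 - a ^ κ) with hu
  set u' : ℂ := star b * star c / (1 - e ^ κ) with hu'
  have wstar : ∀ j : ZMod κ, star (circWeight κ a b c d j)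
      = (if j = 0 then star d else 0) + u' * e ^ ((j - 1).val) := by
    intro j
    rw [circWeight_eq, hu', he]
    split_ifs with hj <;>
      simp [star_add, star_mul, star_pow, star_div₀, star_sub, star_one] <;> ring
  have step3 : ∑ j : ZMod κ, circWeight κ a b c d (ℓ + j) * star (circWeight κ a b c d j)
      = ∑ j : ZMod κ, (((if ℓ + j = 0 then d else 0) + u * a ^ ((ℓ + j - 1).val))
          * ((if j = 0 then star d else 0) + u' * e ^ ((j - 1).val))) := by
    refine Finset.sum_congr rfl fun j _ => ?_
    rw [circWeight_eq, wstar, hu]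
  rw [step3, Pi.single_apply]
  refine conv_eq' κ a e d (star d) u u' ℓ ?_ ?_
  · -- hcore0
    obtain ⟨m, rfl⟩ : ∃ m, κ = m + 1 := ⟨κ - 1, by have := NeZero.ne κ; omega⟩
    rw [hu, hu', hb', hc', hd', hdval, geom_sum_eq (fun h' => h1 (by rw [← h']; ring))]
    simp only [Nat.add_sub_cancel]
    have p1 : a ^ (m + 1) = a * a ^ m := by ring
    have p2 : e ^ (m + 1) = e * e ^ m := by ring
    have p3 : (a * e) ^ (m + 1) = a * a ^ m * (e * e ^ m) := by ring
    rw [p1, p2, p3]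
    have := scalar0' a e b c (a ^ m) (e ^ m) hb0 hc0 h1
      (by rw [← p1]; exact hD) (by rw [← p2]; exact hD')
    linear_combination this
  · -- hcore1
    intro p q hκpq hval
    subst hκpq
    rw [hu, hu', hb', hc', hd', hdval,
      geom_sum_eq (fun h' => h1 (by rw [← h']; ring)),
      geom_sum_eq (fun h' => h1 (by rw [← h']; ring))]
    have p1 : a ^ (p + q + 2) = a * (a * (a ^ p * a ^ q)) := by ring
    have p2 : e ^ (p + q + 2) = e * (e * (e ^ q * e ^ p)) := by ring
    have p3 : (a * e) ^ (q + 1) = a * a ^ q * (e * e ^ q) := by ring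
    have p4 : (a * e) ^ (p + 1) = a * a ^ p * (e * e ^ p) := by ring
    have p5 : a ^ (p + 1) = a * a ^ p := by ring
    have p6 : e ^ (q + 1) = e * e ^ q := by ring
    rw [p1, p2, p3, p4, p5, p6]
    have := scalar1' a e b c (a ^ p) (e ^ q) (a ^ q) (e ^ p) hb0 hc0 h1
      (by rw [← p1]; exact hD) (by rw [← p2]; exact hD')
    linear_combination this
end

section
/- Let U be unitary on a finite-dimensional complex inner product space, P an orthogonal projection, and E = PUP restricted to ran(P). If ker(1 − U) restricted to ran(P) is trivial in the sense that U has no eigenvector of eigenvalue 1 supported in ran(P) (i.e. no v ≠ 0 with Pv = v and Uv = v), then I − E is invertible on ran(P). -/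
open ContinuousLinearMap

theorem stmt_7
    {V : Type*} [NormedAddCommGroup V] [InnerProductSpace ℂ V]
    [FiniteDimensional ℂ V]
    (U : V →L[ℂ] V) (hU : adjoint U * U = 1 ∧ U * adjoint U = 1)
    (P : V →L[ℂ] V) (hPidem : P.comp P = P) (hPadj : adjoint P = P)
    (E : V →L[ℂ] V) (hE : E = P.comp (U.comp P))
    (hker : ∀ v : V, v ≠ 0 → ¬(P v = v ∧ U v = v)) :
    ∀ w : V, P w = w → ∃! v : V, P v = v ∧ v - E v = w := by
  have hPP : ∀ x : V, P (P x) = P x := by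
    intro x
    have := congrArg (fun A : V →L[ℂ] V => A x) hPidem
    simpa using this
  have hPE : ∀ x : V, P (E x) = E x := by
    intro x
    simp [hE, comp_apply, hPP]
  -- key injectivity fact
  have hinj : ∀ v : V, P v = v → v - E v = 0 → v = 0 := by
    intro v hPv hv0
    by_contra hvne
    have h1 : v = E v := sub_eq_zero.mp hv0
    have hvE : v = P (U v) := by
      calc v = E v := h1
        _ = P (U v) := by rw [hE]; simp [comp_apply, hPv]
    have hPself : ∀ x y : V, (inner ℂ (P x) y : ℂ) = inner ℂ x (P y) := by
      intro x y
      nth_rewrite 1 [← hPadj]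
      exact adjoint_inner_left P y x
    have hUnorm : (inner ℂ (U v) (U v) : ℂ) = inner ℂ v v := by
      have h1 : adjoint U (U v) = v := by
        have := congrArg (fun A : V →L[ℂ] V => A v) hU.1
        simpa using this
      calc (inner ℂ (U v) (U v) : ℂ) = inner ℂ (adjoint U (U v)) v := by
            rw [adjoint_inner_left]
        _ = inner ℂ v v := by rw [h1]
    have hvUv : (inner ℂ v (U v) : ℂ) = inner ℂ v v := by
      calc (inner ℂ v (U v) : ℂ) = inner ℂ (P v) (U v) := by rw [hPv]
        _ = inner ℂ v (P (U v)) := hPself v (U v)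
        _ = inner ℂ v v := by rw [← hvE]
    have hUvv : (inner ℂ (U v) v : ℂ) = inner ℂ v v := by
      have := congrArg (starRingEnd ℂ) hvUv
      rw [inner_conj_symm, inner_conj_symm] at this
      exact this
    have hzero : (inner ℂ (U v - v) (U v - v) : ℂ) = 0 := by
      rw [inner_sub_left, inner_sub_right, inner_sub_right, hUnorm, hvUv, hUvv]
      ring
    have hUv : U v = v := by
      have := inner_self_eq_zero.mp hzero
      exact sub_eq_zero.mp this
    exact hker v hvne ⟨hPv, hUv⟩
  intro w hw
  set S : Submodule ℂ V := LinearMap.range (P : V →ₗ[ℂ] V) with hS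
  have hmem : ∀ x : V, x ∈ S ↔ P x = x := by
    intro x
    constructor
    · rintro ⟨y, rfl⟩; exact hPP y
    · intro h; exact ⟨x, h⟩
  have hstab : ∀ x ∈ S, ((1 : V →ₗ[ℂ] V) - (E : V →ₗ[ℂ] V)) x ∈ S := by
    intro x hx
    rw [hmem] at hx ⊢
    simp [map_sub, hx, hPE]
  let L : S →ₗ[ℂ] S := LinearMap.restrict _ hstab
  have hLinj : Function.Injective L := by
    intro x y hxy
    have h0 : L (x - y) = 0 := by rw [map_sub, hxy, sub_self]
    have h1 : (x : V) - (y : V) - E ((x : V) - (y : V)) = 0 := by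
      have := congrArg (Subtype.val) h0
      simpa [L, LinearMap.restrict_apply] using this
    have hP : P ((x : V) - (y : V)) = (x : V) - (y : V) := by
      have hx := (hmem x).mp x.2
      have hy := (hmem y).mp y.2
      simp [map_sub, hx, hy]
    have := hinj _ hP h1
    exact Subtype.ext (sub_eq_zero.mp (by simpa using this))
  have hLsurj : Function.Surjective L := (LinearMap.injective_iff_surjective).mp hLinj
  obtain ⟨v, hv⟩ := hLsurj ⟨w, (hmem w).mpr hw⟩
  refine ⟨v, ⟨(hmem v).mp v.2, ?_⟩, ?_⟩
  · have := congrArg (Subtype.val) hv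
    simpa [L, LinearMap.restrict_apply] using this
  · intro y hy
    have hyS : y ∈ S := (hmem y).mpr hy.1
    have hveq : (v : V) - E v = w := by
      have := congrArg (Subtype.val) hv
      simpa [L, LinearMap.restrict_apply] using this
    have hP : P (y - (v : V)) = y - (v : V) := by
      simp [map_sub, hy.1, (hmem v).mp v.2]
    have h0 : (y - (v : V)) - E (y - (v : V)) = 0 := by
      rw [map_sub]
      have := hy.2
      rw [← hveq] at this
      abel_nf
      abel_nf at this
      linear_combination (norm := abel_nf) this
    have := hinj _ hP h0
    have : y = (v : V) := sub_eq_zero.mp this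
    exact this
end
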